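/- Let A be a real n×d matrix with rank(A) = n, b ∈ ℝⁿ, and suppose the set Q = {x ∈ ℝ^d : x ≥ 0 componentwise and Ax = b} is bounded. Let c ∈ ℝ^d be a vector not contained in the row space of A, p ∈ ℝ, and H = {x ∈ ℝ^d : c·x = p}. Then every extreme point of Q ∩ H can be written as a convex combination λ·x¹ + (1−λ)·x² with λ ∈ [0,1], where x¹ and x² are extreme points of Q. -/

import Mathlib

open Matrix

/-- Moving from `x` along a one-dimensional feasible direction `v` to the boundary of `Q`
gives an extreme point of `Q`. -/
lemma endpoint_extreme (n d : ℕ) (A : Matrix (Fin n) (Fin d) ℝ) (b : Fin n → ℝ)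
    (x : Fin d → ℝ) (hxQ : x ∈ {x : Fin d → ℝ | (∀ i, 0 ≤ x i) ∧ A.mulVec x = b})
    (v : Fin d → ℝ)
    (hAv : A.mulVec v = 0) (hz : ∀ i, x i = 0 → v i = 0)
    (hone : ∀ u, A.mulVec u = 0 → (∀ i, x i = 0 → u i = 0) → ∃ s : ℝ, u = s • v)
    (j : Fin d) (hj : v j < 0) :
    ∃ t : ℝ, 0 < t ∧ x + t • v ∈ Set.extremePoints ℝ {x : Fin d → ℝ | (∀ i, 0 ≤ x i) ∧ A.mulVec x = b} := by
  obtain ⟨hx0, hAx⟩ := hxQ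
  set S : Finset (Fin d) := Finset.univ.filter (fun i => v i < 0) with hS
  have hSne : S.Nonempty := ⟨j, by simp [hS, hj]⟩
  have hxpos : ∀ i ∈ S, 0 < x i := by
    intro i hi
    have hvi : v i < 0 := by simpa [hS] using hi
    rcases lt_or_eq_of_le (hx0 i) with h | h
    · exact h
    · exact absurd (hz i h.symm) (by linarith)
  set t : ℝ := S.inf' hSne (fun i => x i / (-v i)) with ht
  have htpos : 0 < t := by
    rw [ht, Finset.lt_inf'_iff]
    intro i hi
    have hvi : v i < 0 := by simpa [hS] using hi
    exact div_pos (hxpos i hi) (by linarith)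
  obtain ⟨j₀, hj₀S, hj₀⟩ := Finset.exists_mem_eq_inf' hSne (fun i => x i / (-v i))
  have hvj₀ : v j₀ < 0 := by simpa [hS] using hj₀S
  refine ⟨t, htpos, ?_⟩
  have hmem : ∀ i, 0 ≤ x i + t * v i := by
    intro i
    by_cases hvi : v i < 0
    · have hiS : i ∈ S := by simp [hS, hvi]
      have h1 : t ≤ x i / (-v i) := Finset.inf'_le _ hiS
      have h2 : t * (-v i) ≤ x i := by
        rw [← le_div_iff₀ (by linarith : (0:ℝ) < -v i)]; exact h1
      nlinarith
    · push_neg at hvi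
      have := mul_nonneg htpos.le hvi
      linarith [hx0 i]
  have hx₁Q : x + t • v ∈ {x : Fin d → ℝ | (∀ i, 0 ≤ x i) ∧ A.mulVec x = b} := by
    refine ⟨fun i => by simpa using hmem i, ?_⟩
    rw [Matrix.mulVec_add, Matrix.mulVec_smul, hAv, hAx, smul_zero, add_zero]
  have hx₁j₀ : (x + t • v) j₀ = 0 := by
    have htj : t = x j₀ / (-v j₀) := hj₀
    have hne : v j₀ ≠ 0 := ne_of_lt hvj₀
    simp only [Pi.add_apply, Pi.smul_apply, smul_eq_mul, htj]
    have h4 : x j₀ / -v j₀ * v j₀ = -x j₀ := by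
      rw [div_mul_eq_mul_div, mul_div_assoc, div_neg, div_self hne, mul_neg_one]
    rw [h4]; ring
  have hzsub : ∀ i, x i = 0 → (x + t • v) i = 0 := by
    intro i hi
    simp [hi, hz i hi]
  rw [mem_extremePoints]
  refine ⟨hx₁Q, ?_⟩
  intro y hy z hzQ hseg
  obtain ⟨a, bb, ha, hbb, hab, hsum⟩ := hseg
  have hyz0 : ∀ i, x i = 0 → y i = 0 ∧ z i = 0 := by
    intro i hi
    have h0 : (x + t • v) i = 0 := hzsub i hi
    have h1 : a * y i + bb * z i = 0 := by
      have := congrFun hsum i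
      simpa [h0] using this
    constructor
    · nlinarith [hy.1 i, hzQ.1 i]
    · nlinarith [hy.1 i, hzQ.1 i]
  have dir : ∀ w : Fin d → ℝ, A.mulVec w = b → (0 ≤ w j₀) →
      (∀ i, x i = 0 → w i = 0) → ∃ s : ℝ, s ≤ 0 ∧ w - (x + t • v) = s • v := by
    intro w hAw hwj₀ hw0
    have h1 : A.mulVec (w - (x + t • v)) = 0 := by
      rw [Matrix.mulVec_sub, hAw, hx₁Q.2, sub_self]
    have h2 : ∀ i, x i = 0 → (w - (x + t • v)) i = 0 := by
      intro i hi
      simp [hw0 i hi, hzsub i hi]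
    obtain ⟨s, hs⟩ := hone _ h1 h2
    refine ⟨s, ?_, hs⟩
    have h3 : w j₀ = s * v j₀ := by
      have := congrFun hs j₀
      simpa [hx₁j₀] using this
    nlinarith
  obtain ⟨s, hs0, hs⟩ := dir y hy.2 (hy.1 j₀) (fun i hi => (hyz0 i hi).1)
  obtain ⟨s', hs'0, hs'⟩ := dir z hzQ.2 (hzQ.1 j₀) (fun i hi => (hyz0 i hi).2)
  have hcomb : a • (y - (x + t • v)) + bb • (z - (x + t • v)) = 0 := by
    have : a • y + bb • z = (a + bb) • (x + t • v) := by rw [hab, one_smul, hsum]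
    rw [smul_sub, smul_sub, add_smul] at *
    abel_nf
    abel_nf at this
    linear_combination (norm := module) this
  rw [hs, hs'] at hcomb
  have hcj₀ : (a * s + bb * s') * v j₀ = 0 := by
    have := congrFun hcomb j₀
    simp only [Pi.add_apply, Pi.smul_apply, smul_eq_mul, Pi.zero_apply] at this
    ring_nf
    ring_nf at this
    linarith
  have hss : a * s + bb * s' = 0 := by
    rcases mul_eq_zero.mp hcj₀ with h | h
    · exact h
    · exact absurd h (ne_of_lt hvj₀)
  have hs_eq : s = 0 ∧ s' = 0 := by
    constructor <;> nlinarith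
  constructor
  · have : y - (x + t • v) = 0 := by rw [hs, hs_eq.1, zero_smul]
    have := sub_eq_zero.mp this
    exact this
  · have : z - (x + t • v) = 0 := by rw [hs', hs_eq.2, zero_smul]
    exact sub_eq_zero.mp this

/-- If `rank A = n`, `Q = {x : x ≥ 0, A x = b}` is bounded, and `c` is not in the
row space of `A`, then every extreme point of `Q ∩ {x : c·x = p}` is a convex
combination of two extreme points of `Q`. -/
theorem extremePoint_inter_hyperplane_convexComb
    (n d : ℕ) (A : Matrix (Fin n) (Fin d) ℝ) (hrank : A.rank = n)
    (b : Fin n → ℝ) (Q : Set (Fin d → ℝ))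
    (hQ : Q = {x | (∀ i, 0 ≤ x i) ∧ A.mulVec x = b})
    (hbdd : Bornology.IsBounded Q)
    (c : Fin d → ℝ) (hc : c ∉ Submodule.span ℝ (Set.range A))
    (p : ℝ) (H : Set (Fin d → ℝ)) (hH : H = {x | c ⬝ᵥ x = p})
    (x : Fin d → ℝ) (hx : x ∈ Set.extremePoints ℝ (Q ∩ H)) :
    ∃ l ∈ Set.Icc (0 : ℝ) 1, ∃ x₁ ∈ Set.extremePoints ℝ Q, ∃ x₂ ∈ Set.extremePoints ℝ Q,
      x = l • x₁ + (1 - l) • x₂ := by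
  rw [mem_extremePoints] at hx
  obtain ⟨⟨hxQ, hxH⟩, hxext⟩ := hx
  have hx0 : ∀ i, 0 ≤ x i := (hQ ▸ hxQ).1
  have hAx : A.mulVec x = b := (hQ ▸ hxQ).2
  have hcx : c ⬝ᵥ x = p := by rw [hH] at hxH; exact hxH
  -- Key: a two-sided feasible direction orthogonal to c is zero
  have key : ∀ v : Fin d → ℝ, A.mulVec v = 0 → (∀ i, x i = 0 → v i = 0) →
      c ⬝ᵥ v = 0 → v = 0 := by
    intro v hAv hv0 hcv
    by_contra hvne
    obtain ⟨i₀, hi₀⟩ : ∃ i, v i ≠ 0 := by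
      by_contra h; push_neg at h; exact hvne (funext h)
    have hne : (Finset.univ : Finset (Fin d)).Nonempty := ⟨i₀, Finset.mem_univ _⟩
    set m : ℝ := Finset.univ.inf' hne (fun i => if x i = 0 then 1 else x i) with hm
    have hmpos : 0 < m := by
      rw [hm, Finset.lt_inf'_iff]
      intro i _
      by_cases h : x i = 0
      · simp [h]
      · simp only [h, if_false]
        exact lt_of_le_of_ne (hx0 i) (Ne.symm h)
    have hM : 0 < ‖v‖ := norm_pos_iff.mpr hvne
    set ε : ℝ := m / (2 * ‖v‖) with hε
    have hεpos : 0 < ε := div_pos hmpos (by positivity)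
    have hbound : ∀ i, |ε * v i| < x i ∨ v i = 0 := by
      intro i
      by_cases h : x i = 0
      · exact Or.inr (hv0 i h)
      · left
        have hxi : m ≤ x i := by
          have := Finset.inf'_le (fun i => if x i = 0 then 1 else x i) (Finset.mem_univ i)
          simp only [h, if_false] at this
          exact this
        have hvi : |v i| ≤ ‖v‖ := by
          have := norm_le_pi_norm v i
          simpa using this
        have : |ε * v i| ≤ ε * ‖v‖ := by
          rw [abs_mul, abs_of_pos hεpos]
          exact mul_le_mul_of_nonneg_left hvi hεpos.le
        have hεM : ε * ‖v‖ = m / 2 := by rw [hε]; field_simp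
        have : |ε * v i| ≤ m / 2 := by rw [← hεM]; exact this
        linarith
    have hmemQ : ∀ (σ : ℝ), σ = 1 ∨ σ = -1 → x + (σ * ε) • v ∈ Q ∩ H := by
      intro σ hσ
      have hσ1 : |σ| = 1 := by rcases hσ with h | h <;> simp [h]
      constructor
      · rw [hQ]
        constructor
        · intro i
          rcases hbound i with h | h
          · have : |σ * ε * v i| < x i := by
              rw [abs_mul, abs_mul, hσ1, one_mul, ← abs_mul]
              exact h
            have := abs_lt.mp this
            simp only [Pi.add_apply, Pi.smul_apply, smul_eq_mul]
            linarith [this.1]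
          · simp [h, hx0 i]
        · rw [Matrix.mulVec_add, Matrix.mulVec_smul, hAv, hAx, smul_zero, add_zero]
      · rw [hH]
        show c ⬝ᵥ (x + (σ * ε) • v) = p
        rw [dotProduct_add, dotProduct_smul, hcv, smul_zero, add_zero, hcx]
    have hy := hmemQ (-1) (Or.inr rfl)
    have hz := hmemQ 1 (Or.inl rfl)
    have hseg : x ∈ openSegment ℝ (x + (-1 * ε) • v) (x + (1 * ε) • v) := by
      refine ⟨1/2, 1/2, by norm_num, by norm_num, by norm_num, ?_⟩
      funext i
      simp only [Pi.add_apply, Pi.smul_apply, smul_eq_mul]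
      ring
    have := (hxext _ hy _ hz hseg).2
    have heq : (1 * ε) • v = 0 := by
      have h2 := this
      have : x + (1 * ε) • v = x := h2
      have := congrArg (fun w => w - x) this
      simpa [add_sub_cancel_left] using this
    have : v = 0 := by
      have hεne : (1:ℝ) * ε ≠ 0 := by positivity
      exact (smul_eq_zero.mp heq).resolve_left hεne
    exact hvne this
  by_cases hL : ∀ v : Fin d → ℝ, A.mulVec v = 0 → (∀ i, x i = 0 → v i = 0) → v = 0
  · -- x itself is an extreme point of Q
    have hxex : x ∈ Set.extremePoints ℝ Q := by
      rw [mem_extremePoints]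
      refine ⟨hxQ, ?_⟩
      intro y hy z hz hseg
      obtain ⟨a, bb, ha, hbb, hab, hsum⟩ := hseg
      have hyQ := hQ ▸ hy
      have hzQ := hQ ▸ hz
      have hy0 : ∀ i, x i = 0 → y i = 0 ∧ z i = 0 := by
        intro i hi
        have h1 : a * y i + bb * z i = 0 := by
          have := congrFun hsum i
          simpa [hi] using this
        constructor <;> nlinarith [hyQ.1 i, hzQ.1 i]
      have hyx : y = x := by
        have h1 : A.mulVec (y - x) = 0 := by rw [Matrix.mulVec_sub, hyQ.2, hAx, sub_self]
        have h2 : ∀ i, x i = 0 → (y - x) i = 0 := by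
          intro i hi; simp [(hy0 i hi).1, hi]
        have := hL _ h1 h2
        exact sub_eq_zero.mp this
      have hzx : z = x := by
        have h1 : A.mulVec (z - x) = 0 := by rw [Matrix.mulVec_sub, hzQ.2, hAx, sub_self]
        have h2 : ∀ i, x i = 0 → (z - x) i = 0 := by
          intro i hi; simp [(hy0 i hi).2, hi]
        have := hL _ h1 h2
        exact sub_eq_zero.mp this
      exact ⟨hyx, hzx⟩
    exact ⟨1, by norm_num, x, hxex, x, hxex, by simp⟩
  · push_neg at hL
    obtain ⟨v, hAv, hv0, hvne⟩ := hL
    have hcv : c ⬝ᵥ v ≠ 0 := fun h => hvne (key v hAv hv0 h)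
    have hone : ∀ u, A.mulVec u = 0 → (∀ i, x i = 0 → u i = 0) → ∃ s : ℝ, u = s • v := by
      intro u hAu hu0
      refine ⟨(c ⬝ᵥ u) / (c ⬝ᵥ v), ?_⟩
      have h1 : A.mulVec (u - ((c ⬝ᵥ u) / (c ⬝ᵥ v)) • v) = 0 := by
        rw [Matrix.mulVec_sub, Matrix.mulVec_smul, hAu, hAv, smul_zero, sub_zero]
      have h2 : ∀ i, x i = 0 → (u - ((c ⬝ᵥ u) / (c ⬝ᵥ v)) • v) i = 0 := by
        intro i hi; simp [hu0 i hi, hv0 i hi]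
      have h3 : c ⬝ᵥ (u - ((c ⬝ᵥ u) / (c ⬝ᵥ v)) • v) = 0 := by
        rw [dotProduct_sub, dotProduct_smul, smul_eq_mul]
        field_simp
        ring
      have := key _ h1 h2 h3
      exact sub_eq_zero.mp this
    -- need directions with a negative coordinate, from boundedness
    have hneg : ∀ w : Fin d → ℝ, A.mulVec w = 0 → (∀ i, x i = 0 → w i = 0) → w ≠ 0 →
        ∃ j, w j < 0 := by
      intro w hAw hw0 hwne
      by_contra h
      push_neg at h
      obtain ⟨C, hC⟩ := isBounded_iff_forall_norm_le.mp hbdd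
      obtain ⟨i₀, hi₀⟩ : ∃ i, w i ≠ 0 := by
        by_contra h'; push_neg at h'; exact hwne (funext h')
      have hwi₀ : 0 < w i₀ := lt_of_le_of_ne (h i₀) (Ne.symm hi₀)
      set T : ℝ := (C + |x i₀| + 1) / w i₀ with hT
      have hC0 : 0 ≤ C := le_trans (norm_nonneg x) (hC x hxQ)
      have hTpos : 0 < T := div_pos (by positivity) hwi₀
      have hmem : x + T • w ∈ Q := by
        rw [hQ]
        constructor
        · intro i
          have := mul_nonneg hTpos.le (h i)
          simp only [Pi.add_apply, Pi.smul_apply, smul_eq_mul]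
          linarith [hx0 i]
        · rw [Matrix.mulVec_add, Matrix.mulVec_smul, hAw, hAx, smul_zero, add_zero]
      have h1 : |(x + T • w) i₀| ≤ C := by
        have := norm_le_pi_norm (x + T • w) i₀
        have h2 := hC _ hmem
        simp only [Real.norm_eq_abs] at this
        calc |(x + T • w) i₀| ≤ ‖x + T • w‖ := this
          _ ≤ C := h2
      have h2 : (x + T • w) i₀ = x i₀ + (C + |x i₀| + 1) := by
        simp only [Pi.add_apply, Pi.smul_apply, smul_eq_mul, hT]
        field_simp
      have h3 : C + 1 ≤ (x + T • w) i₀ := by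
        rw [h2]
        have := abs_nonneg (x i₀)
        have := neg_abs_le (x i₀)
        linarith
      have := le_abs_self ((x + T • w) i₀)
      linarith
    obtain ⟨j₁, hj₁⟩ := hneg v hAv hv0 hvne
    have hmvne : -v ≠ 0 := fun h => hvne (by simpa using congrArg Neg.neg h)
    have hAmv : A.mulVec (-v) = 0 := by rw [Matrix.mulVec_neg, hAv, neg_zero]
    have hmv0 : ∀ i, x i = 0 → (-v) i = 0 := by intro i hi; simp [hv0 i hi]
    obtain ⟨j₂, hj₂⟩ := hneg (-v) hAmv hmv0 hmvne
    have honem : ∀ u, A.mulVec u = 0 → (∀ i, x i = 0 → u i = 0) → ∃ s : ℝ, u = s • (-v) := by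
      intro u h1 h2
      obtain ⟨s, hs⟩ := hone u h1 h2
      exact ⟨-s, by rw [hs]; simp⟩
    have hxQ' : x ∈ {x : Fin d → ℝ | (∀ i, 0 ≤ x i) ∧ A.mulVec x = b} := ⟨hx0, hAx⟩
    obtain ⟨t₁, ht₁, hext₁⟩ := endpoint_extreme n d A b x hxQ' v hAv hv0 hone j₁ hj₁
    obtain ⟨t₂, ht₂, hext₂⟩ := endpoint_extreme n d A b x hxQ' (-v) hAmv hmv0 honem j₂
      (by simpa using hj₂)
    set l : ℝ := t₂ / (t₁ + t₂) with hl
    have hsumpos : 0 < t₁ + t₂ := by linarith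
    refine ⟨l, ⟨le_of_lt (by rw [hl]; exact div_pos ht₂ hsumpos), ?_⟩, x + t₁ • v, hQ ▸ hext₁, x + t₂ • (-v), hQ ▸ hext₂, ?_⟩
    · rw [hl, div_le_one hsumpos]; linarith
    · funext i
      simp only [Pi.add_apply, Pi.smul_apply, smul_eq_mul, Pi.neg_apply, hl]
      field_simp
      ring
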